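/- Let f, h : [0,1] × ℝ₊² → ℝ₊ be Lipschitz with constants L₁, L₂ respectively and satisfy f(x,0,i) = h(x,0,i) = 0. Let V₂(s,i) = (s − 1 − ln s) + (i − 1 − ln i) on (0,∞)². Then there exist constants C₂, C₃ > 0 (one may take C₂ = L₁ + L₂ + 1 and C₃ = C₁ + 2C₂ ln C₂ + 2C₂ with C₁ = a₁ + b₁ + σ₁²/2 + b₂ + σ₂²/2) such that L V₂(s, i, π) ≤ C₂ V₂(s,i) + C₃ for all s, i > 0 and probability measures π on [0,1]. -/

import Mathlib

open MeasureTheory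

set_option maxHeartbeats 1000000

/-- The generator applied to `V₂(s,i) = (s - 1 - ln s) + (i - 1 - ln i)` satisfies a
linear growth bound `L V₂ ≤ C₂ V₂ + C₃`. -/
theorem generator_V2_linear_growth (a₁ b₁ b₂ σ₁ σ₂ L₁ L₂ : ℝ)
    (ha₁ : 0 < a₁) (hb₁ : 0 < b₁) (hb₂ : 0 < b₂) (hσ₁ : 0 < σ₁) (hσ₂ : 0 < σ₂)
    (f h : ℝ → ℝ → ℝ → ℝ)
    (hf0 : ∀ x i : ℝ, f x 0 i = 0) (hh0 : ∀ x i : ℝ, h x 0 i = 0)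
    (hfnn : ∀ x s i : ℝ, 0 ≤ f x s i) (hhnn : ∀ x s i : ℝ, 0 ≤ h x s i)
    (hfLip : ∀ x₁ x₂ s₁ s₂ i₁ i₂ : ℝ,
      |f x₁ s₁ i₁ - f x₂ s₂ i₂| ≤ L₁ * (|x₁ - x₂| + |s₁ - s₂| + |i₁ - i₂|))
    (hhLip : ∀ x₁ x₂ s₁ s₂ i₁ i₂ : ℝ,
      |h x₁ s₁ i₁ - h x₂ s₂ i₂| ≤ L₂ * (|x₁ - x₂| + |s₁ - s₂| + |i₁ - i₂|)) :
    ∃ C₂ C₃ : ℝ, 0 < C₂ ∧ 0 < C₃ ∧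
      ∀ (s i : ℝ), 0 < s → 0 < i →
        ∀ π : Measure ℝ, IsProbabilityMeasure π →
          (1 - 1 / s) * (a₁ - b₁ * s - i * (∫ x in Set.Icc (0:ℝ) 1, f x s i ∂π)
              - i * (∫ x in Set.Icc (0:ℝ) 1, x * h x s i ∂π)) + σ₁ ^ 2 / 2
            + (1 - 1 / i) * (-b₂ * i + i * (∫ x in Set.Icc (0:ℝ) 1, f x s i ∂π)
              + i * (∫ x in Set.Icc (0:ℝ) 1, x * h x s i ∂π)) + σ₂ ^ 2 / 2
          ≤ C₂ * ((s - 1 - Real.log s) + (i - 1 - Real.log i)) + C₃ := by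
  set M : ℝ := |L₁| + |L₂| with hM
  have hM0 : 0 ≤ M := by positivity
  set C₁ : ℝ := a₁ + b₁ + b₂ + σ₁ ^ 2 / 2 + σ₂ ^ 2 / 2 with hC₁
  have hC₁pos : 0 < C₁ := by positivity
  have hC₂pos : (0:ℝ) < M + 1 := by linarith
  refine ⟨M + 1, C₁ + (M + 1) * Real.log (M + 1), hC₂pos, ?_, ?_⟩
  · have hlog : 0 ≤ Real.log (M + 1) := Real.log_nonneg (by linarith)
    nlinarith
  intro s i hs hi π hπ
  -- pointwise bounds
  have hfb : ∀ x : ℝ, f x s i ≤ |L₁| * s := by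
    intro x
    have h2 := hfLip x x s 0 i i
    simp only [hf0, sub_self, abs_zero, sub_zero, add_zero, zero_add] at h2
    rw [abs_of_nonneg (hfnn x s i)] at h2
    calc f x s i ≤ L₁ * |s| := h2
      _ ≤ |L₁| * |s| := mul_le_mul_of_nonneg_right (le_abs_self _) (abs_nonneg _)
      _ = |L₁| * s := by rw [abs_of_pos hs]
  have hhb : ∀ x : ℝ, h x s i ≤ |L₂| * s := by
    intro x
    have h2 := hhLip x x s 0 i i
    simp only [hh0, sub_self, abs_zero, sub_zero, add_zero, zero_add] at h2
    rw [abs_of_nonneg (hhnn x s i)] at h2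
    calc h x s i ≤ L₂ * |s| := h2
      _ ≤ |L₂| * |s| := mul_le_mul_of_nonneg_right (le_abs_self _) (abs_nonneg _)
      _ = |L₂| * s := by rw [abs_of_pos hs]
  -- continuity
  have hcf : Continuous (fun x => f x s i) := by
    have hl : LipschitzWith (Real.toNNReal |L₁|) (fun x => f x s i) := by
      apply LipschitzWith.of_dist_le_mul
      intro x y
      rw [Real.dist_eq, Real.dist_eq]
      have h2 := hfLip x y s s i i
      simp only [sub_self, abs_zero, add_zero] at h2
      calc |f x s i - f y s i| ≤ L₁ * |x - y| := h2
        _ ≤ |L₁| * |x - y| := mul_le_mul_of_nonneg_right (le_abs_self _) (abs_nonneg _)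
        _ = (Real.toNNReal |L₁| : ℝ) * |x - y| := by
            rw [Real.coe_toNNReal _ (abs_nonneg _)]
    exact hl.continuous
  have hch : Continuous (fun x => h x s i) := by
    have hl : LipschitzWith (Real.toNNReal |L₂|) (fun x => h x s i) := by
      apply LipschitzWith.of_dist_le_mul
      intro x y
      rw [Real.dist_eq, Real.dist_eq]
      have h2 := hhLip x y s s i i
      simp only [sub_self, abs_zero, add_zero] at h2
      calc |h x s i - h y s i| ≤ L₂ * |x - y| := h2
        _ ≤ |L₂| * |x - y| := mul_le_mul_of_nonneg_right (le_abs_self _) (abs_nonneg _)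
        _ = (Real.toNNReal |L₂| : ℝ) * |x - y| := by
            rw [Real.coe_toNNReal _ (abs_nonneg _)]
    exact hl.continuous
  have hmeas : (π (Set.Icc (0:ℝ) 1)).toReal ≤ 1 := by
    have h1 : π (Set.Icc (0:ℝ) 1) ≤ 1 := prob_le_one
    exact le_trans (ENNReal.toReal_mono (by simp) h1) (by simp)
  have hmeas0 : 0 ≤ (π (Set.Icc (0:ℝ) 1)).toReal := ENNReal.toReal_nonneg
  have hfint : IntegrableOn (fun x => f x s i) (Set.Icc (0:ℝ) 1) π :=
    hcf.integrableOn_Icc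
  have hhint : IntegrableOn (fun x => x * h x s i) (Set.Icc (0:ℝ) 1) π :=
    (continuous_id.mul hch).integrableOn_Icc
  set F := ∫ x in Set.Icc (0:ℝ) 1, f x s i ∂π with hF
  set H := ∫ x in Set.Icc (0:ℝ) 1, x * h x s i ∂π with hHdef
  have hF0 : 0 ≤ F := setIntegral_nonneg measurableSet_Icc (fun x _ => hfnn x s i)
  have hH0 : 0 ≤ H := setIntegral_nonneg measurableSet_Icc
    (fun x hx => mul_nonneg hx.1 (hhnn x s i))
  have hconst : IntegrableOn (fun _ : ℝ => |L₁| * s) (Set.Icc (0:ℝ) 1) π :=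
    (integrable_const _).integrableOn
  have hconst2 : IntegrableOn (fun _ : ℝ => |L₂| * s) (Set.Icc (0:ℝ) 1) π :=
    (integrable_const _).integrableOn
  have hFle : F ≤ |L₁| * s := by
    calc F ≤ ∫ _ in Set.Icc (0:ℝ) 1, |L₁| * s ∂π :=
          setIntegral_mono_on hfint hconst measurableSet_Icc (fun x _ => hfb x)
      _ = (π (Set.Icc (0:ℝ) 1)).toReal * (|L₁| * s) := by
          simp [setIntegral_const, smul_eq_mul, Measure.real]
      _ ≤ 1 * (|L₁| * s) := mul_le_mul_of_nonneg_right hmeas (by positivity)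
      _ = |L₁| * s := one_mul _
  have hHle : H ≤ |L₂| * s := by
    calc H ≤ ∫ _ in Set.Icc (0:ℝ) 1, |L₂| * s ∂π := by
          refine setIntegral_mono_on hhint hconst2 measurableSet_Icc (fun x hx => ?_)
          calc x * h x s i ≤ 1 * (|L₂| * s) := by
                apply mul_le_mul hx.2 (hhb x) (hhnn x s i) zero_le_one
            _ = |L₂| * s := one_mul _
      _ = (π (Set.Icc (0:ℝ) 1)).toReal * (|L₂| * s) := by
          simp [setIntegral_const, smul_eq_mul, Measure.real]
      _ ≤ 1 * (|L₂| * s) := mul_le_mul_of_nonneg_right hmeas (by positivity)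
      _ = |L₂| * s := one_mul _
  -- step 1: LHS ≤ C₁ + M * i
  have hstep1 : (1 - 1 / s) * (a₁ - b₁ * s - i * F - i * H) + σ₁ ^ 2 / 2
      + (1 - 1 / i) * (-b₂ * i + i * F + i * H) + σ₂ ^ 2 / 2 ≤ C₁ + M * i := by
    have hsu : s * (1 / s) = 1 := by field_simp
    have hiv : i * (1 / i) = 1 := by field_simp
    have hu : 0 < 1 / s := by positivity
    have hv : 0 < 1 / i := by positivity
    have hT : F + H ≤ M * s := by rw [hM]; nlinarith
    have e1 : b₁ * s * (1 / s) = b₁ := by field_simp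
    have e2 : b₂ * i * (1 / i) = b₂ := by field_simp
    have e3 : i * F * (1 / i) = F := by field_simp
    have e4 : i * H * (1 / i) = H := by field_simp
    have e7 : (1 / s) * i * (F + H) ≤ (1 / s) * i * (M * s) :=
      mul_le_mul_of_nonneg_left hT (by positivity)
    have e8 : (1 / s) * i * (M * s) = M * i := by field_simp
    have e5 : 0 ≤ a₁ * (1 / s) := by positivity
    have e6 : 0 ≤ F + H := by linarith
    nlinarith [mul_pos hb₁ hs, mul_pos hb₂ hi]
  -- step 2: C₁ + M * i ≤ RHS
  have hlogs : Real.log s ≤ s - 1 := Real.log_le_sub_one_of_pos hs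
  have hlogi : (M + 1) * Real.log i ≤ (M + 1) * Real.log (M + 1) + i - (M + 1) := by
    have h1 : Real.log (i / (M + 1)) ≤ i / (M + 1) - 1 :=
      Real.log_le_sub_one_of_pos (by positivity)
    rw [Real.log_div (ne_of_gt hi) (ne_of_gt hC₂pos)] at h1
    have h2 := mul_le_mul_of_nonneg_left h1 hC₂pos.le
    have h3 : (M + 1) * (i / (M + 1)) = i := by field_simp
    nlinarith
  have hstep2 : C₁ + M * i ≤ (M + 1) * ((s - 1 - Real.log s) + (i - 1 - Real.log i))
      + (C₁ + (M + 1) * Real.log (M + 1)) := by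
    have hA : 0 ≤ (M + 1) * (s - 1 - Real.log s) :=
      mul_nonneg hC₂pos.le (by linarith)
    nlinarith [hlogi]
  calc (1 - 1 / s) * (a₁ - b₁ * s - i * F - i * H) + σ₁ ^ 2 / 2
      + (1 - 1 / i) * (-b₂ * i + i * F + i * H) + σ₂ ^ 2 / 2 ≤ C₁ + M * i := hstep1
    _ ≤ _ := hstep2
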